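/- Let (p_n) be a sequence in (0,1) with p_n → 0, and let C_P ⊂ [0,1] be the generalized Cantor set obtained by iteratively removing central parts of relative length p_n. Then the Hausdorff dimension of C_P equals 1. -/

import Mathlib

open Filter MeasureTheory

/-- Length of a rank-`n` interval: `λ_n = ∏_{j<n} (1 - p j)/2` (so `λ_0 = 1`). -/
noncomputable def lam (p : ℕ → ℝ) (n : ℕ) : ℝ := ∏ j ∈ Finset.range n, (1 - p j) / 2

/-- Left endpoint of the rank-`n` interval coded by the binary string `s`. -/
noncomputable def leftPt (p : ℕ → ℝ) {n : ℕ} (s : Fin n → Bool) : ℝ :=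
  ∑ i : Fin n, if s i then lam p i - lam p (i + 1) else 0

/-- The generalized Cantor set: intersection over `n` of the unions of rank-`n` intervals. -/
def genCantorSet (p : ℕ → ℝ) : Set ℝ :=
  ⋂ n : ℕ, ⋃ s : Fin n → Bool, Set.Icc (leftPt p s) (leftPt p s + lam p n)

namespace GenCantorAux

open Set

variable {p : ℕ → ℝ}

lemma lam_zero : lam p 0 = 1 := by simp [lam]

lemma lam_succ (n : ℕ) : lam p (n + 1) = lam p n * ((1 - p n) / 2) :=
  Finset.prod_range_succ _ n

lemma lam_pos (hp : ∀ n, p n ∈ Set.Ioo (0:ℝ) 1) (n : ℕ) : 0 < lam p n := by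
  refine Finset.prod_pos fun j _ => ?_
  have h := (hp j).2; linarith

lemma two_lam_succ_lt (hp : ∀ n, p n ∈ Set.Ioo (0:ℝ) 1) (n : ℕ) :
    2 * lam p (n + 1) < lam p n := by
  have h1 := (hp n).1
  have h2 := lam_pos hp n
  rw [lam_succ]
  nlinarith

lemma lam_succ_lt (hp : ∀ n, p n ∈ Set.Ioo (0:ℝ) 1) (n : ℕ) : lam p (n + 1) < lam p n := by
  have := two_lam_succ_lt hp n
  have := lam_pos hp (n + 1)
  linarith

lemma lam_anti (hp : ∀ n, p n ∈ Set.Ioo (0:ℝ) 1) : StrictAnti (lam p) :=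
  strictAnti_nat_of_succ_lt (lam_succ_lt hp)

lemma lam_le_pow (hp : ∀ n, p n ∈ Set.Ioo (0:ℝ) 1) (n : ℕ) : lam p n ≤ 2⁻¹ ^ n := by
  have h2 : (2:ℝ)⁻¹ ^ n = ∏ _j ∈ Finset.range n, (2:ℝ)⁻¹ := by
    rw [Finset.prod_const, Finset.card_range]
  rw [lam, h2]
  refine Finset.prod_le_prod (fun j _ => ?_) (fun j _ => ?_)
  · have h := (hp j).2; linarith
  · have h := (hp j).1; rw [inv_eq_one_div]; linarith

lemma lam_tendsto_zero (hp : ∀ n, p n ∈ Set.Ioo (0:ℝ) 1) :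
    Tendsto (lam p) atTop (nhds 0) := by
  refine squeeze_zero (fun n => (lam_pos hp n).le) (lam_le_pow hp) ?_
  exact tendsto_pow_atTop_nhds_zero_of_lt_one (by norm_num) (by norm_num)

/-- Summand used in the coding map. -/
noncomputable def term (p : ℕ → ℝ) (ω : ℕ → Bool) (i : ℕ) : ℝ :=
  if ω i then lam p i - lam p (i + 1) else 0

/-- The `i`-th binary digit of `x`. -/
noncomputable def bitsOf (x : ℝ) (i : ℕ) : Bool :=
  decide (⌊x * 2 ^ (i + 1)⌋₊ % 2 = 1)

/-- The coding map sending `x ∈ [0,1)` (through its binary digits) into the Cantor set. -/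
noncomputable def cmap (p : ℕ → ℝ) (x : ℝ) : ℝ := ∑' i, term p (bitsOf x) i

lemma term_nonneg (hp : ∀ n, p n ∈ Set.Ioo (0:ℝ) 1) (ω : ℕ → Bool) (i : ℕ) :
    0 ≤ term p ω i := by
  unfold term; split
  · linarith [lam_succ_lt hp i]
  · exact le_refl _

lemma term_le (hp : ∀ n, p n ∈ Set.Ioo (0:ℝ) 1) (ω : ℕ → Bool) (i : ℕ) :
    term p ω i ≤ lam p i - lam p (i + 1) := by
  unfold term; split
  · exact le_refl _
  · linarith [lam_succ_lt hp i]

lemma sum_Ico_lam (a b : ℕ) (h : a ≤ b) :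
    ∑ j ∈ Finset.Ico a b, (lam p j - lam p (j+1)) = lam p a - lam p b := by
  have h0 : ∀ m, ∑ j ∈ Finset.Ico 0 m, (lam p j - lam p (j+1)) = lam p 0 - lam p m := by
    intro m
    rw [← Finset.range_eq_Ico]
    exact Finset.sum_range_sub' (lam p) m
  have hc := Finset.sum_Ico_consecutive (fun j => lam p j - lam p (j+1)) (Nat.zero_le a) h
  have ha := h0 a
  have hb := h0 b
  linarith

lemma sum_range_term_le (hp : ∀ n, p n ∈ Set.Ioo (0:ℝ) 1) (ω : ℕ → Bool) (n : ℕ) :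
    ∑ i ∈ Finset.range n, term p ω i ≤ 1 - lam p n := by
  have h1 : ∑ i ∈ Finset.range n, term p ω i
      ≤ ∑ i ∈ Finset.range n, (lam p i - lam p (i+1)) :=
    Finset.sum_le_sum fun i _ => term_le hp ω i
  rw [Finset.sum_range_sub' (lam p) n, lam_zero] at h1
  exact h1

lemma summable_term (hp : ∀ n, p n ∈ Set.Ioo (0:ℝ) 1) (ω : ℕ → Bool) :
    Summable (term p ω) := by
  refine summable_of_sum_range_le (c := 1) (term_nonneg hp ω) fun n => ?_
  have := sum_range_term_le hp ω n
  have := lam_pos hp n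
  linarith

lemma tail_nonneg (hp : ∀ n, p n ∈ Set.Ioo (0:ℝ) 1) (ω : ℕ → Bool) (n : ℕ) :
    0 ≤ ∑' i, term p ω (i + n) :=
  tsum_nonneg fun i => term_nonneg hp ω (i + n)

lemma tail_le (hp : ∀ n, p n ∈ Set.Ioo (0:ℝ) 1) (ω : ℕ → Bool) (n : ℕ) :
    ∑' i, term p ω (i + n) ≤ lam p n := by
  refine Real.tsum_le_of_sum_range_le (fun i => term_nonneg hp ω (i + n)) fun m => ?_
  have h1 : ∑ i ∈ Finset.range m, term p ω (i + n)
      ≤ ∑ i ∈ Finset.range m, (lam p (i + n) - lam p ((i + 1) + n)) := by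
    refine Finset.sum_le_sum fun i _ => ?_
    have := term_le hp ω (i + n)
    have he : (i + n) + 1 = (i + 1) + n := by omega
    rw [he] at this
    exact this
  rw [Finset.sum_range_sub' (fun i => lam p (i + n)) m] at h1
  simp only [Nat.zero_add] at h1
  have := lam_pos hp (m + n)
  linarith

lemma leftPt_eq (ω : ℕ → Bool) (n : ℕ) :
    leftPt p (fun i : Fin n => ω i) = ∑ i ∈ Finset.range n, term p ω i := by
  rw [leftPt, ← Fin.sum_univ_eq_sum_range (fun i => term p ω i) n]
  rfl

lemma cmap_mem (hp : ∀ n, p n ∈ Set.Ioo (0:ℝ) 1) (x : ℝ) (n : ℕ) :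
    cmap p x ∈ Icc (leftPt p (fun i : Fin n => bitsOf x i))
      (leftPt p (fun i : Fin n => bitsOf x i) + lam p n) := by
  rw [leftPt_eq]
  have hsum := summable_term hp (bitsOf x)
  have hsplit := Summable.sum_add_tsum_nat_add n hsum
  have h0 := tail_nonneg hp (bitsOf x) n
  have h1 := tail_le hp (bitsOf x) n
  constructor
  · rw [cmap, ← hsplit]; linarith
  · rw [cmap, ← hsplit]; linarith

lemma cmap_mem_genCantorSet (hp : ∀ n, p n ∈ Set.Ioo (0:ℝ) 1) (x : ℝ) :
    cmap p x ∈ genCantorSet p :=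
  mem_iInter.2 fun n => mem_iUnion.2 ⟨fun i : Fin n => bitsOf x i, cmap_mem hp x n⟩

lemma sep_aux (hp : ∀ n, p n ∈ Set.Ioo (0:ℝ) 1) {n i : ℕ} (hin : i < n) (ω ω' : ℕ → Bool)
    (hcomm : ∀ j, j < i → ω j = ω' j) (hωi : ω i = false) (hω'i : ω' i = true) :
    (∑ j ∈ Finset.range n, term p ω j) + lam p n < ∑ j ∈ Finset.range n, term p ω' j := by
  have hi1n : i + 1 ≤ n := hin
  have hsplit : ∀ ρ : ℕ → Bool, ∑ j ∈ Finset.range n, term p ρ j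
      = (∑ j ∈ Finset.range i, term p ρ j) + term p ρ i
        + ∑ j ∈ Finset.Ico (i+1) n, term p ρ j := by
    intro ρ
    have h1 : (∑ j ∈ Finset.Ico 0 (i+1), term p ρ j) + ∑ j ∈ Finset.Ico (i+1) n, term p ρ j
        = ∑ j ∈ Finset.Ico 0 n, term p ρ j :=
      Finset.sum_Ico_consecutive _ (Nat.zero_le _) hi1n
    rw [← Finset.range_eq_Ico, ← Finset.range_eq_Ico] at h1
    rw [← h1, Finset.sum_range_succ]
  have hA : ∑ j ∈ Finset.range i, term p ω j = ∑ j ∈ Finset.range i, term p ω' j := by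
    refine Finset.sum_congr rfl fun j hj => ?_
    rw [term, term, hcomm j (Finset.mem_range.1 hj)]
  have htω : term p ω i = 0 := by rw [term, hωi]; simp
  have htω' : term p ω' i = lam p i - lam p (i+1) := by rw [term, hω'i]; simp
  have htail : ∑ j ∈ Finset.Ico (i+1) n, term p ω j ≤ lam p (i+1) - lam p n := by
    have h1 : ∑ j ∈ Finset.Ico (i+1) n, term p ω j
        ≤ ∑ j ∈ Finset.Ico (i+1) n, (lam p j - lam p (j+1)) :=
      Finset.sum_le_sum fun j _ => term_le hp ω j
    rw [sum_Ico_lam (i+1) n hi1n] at h1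
    exact h1
  have htail' : (0:ℝ) ≤ ∑ j ∈ Finset.Ico (i+1) n, term p ω' j :=
    Finset.sum_nonneg fun j _ => term_nonneg hp ω' j
  have hkey := two_lam_succ_lt hp i
  rw [hsplit ω, hsplit ω', hA, htω, htω']
  linarith

lemma separation (hp : ∀ n, p n ∈ Set.Ioo (0:ℝ) 1) {n : ℕ} {s t : Fin n → Bool} (hst : s ≠ t) :
    leftPt p s + lam p n < leftPt p t ∨ leftPt p t + lam p n < leftPt p s := by
  classical
  set ωs : ℕ → Bool := fun k => if h : k < n then s ⟨k, h⟩ else false with hωs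
  set ωt : ℕ → Bool := fun k => if h : k < n then t ⟨k, h⟩ else false with hωt
  have hes : (fun i : Fin n => ωs i) = s := by
    funext i; simp [hωs, i.isLt]
  have het : (fun i : Fin n => ωt i) = t := by
    funext i; simp [hωt, i.isLt]
  have hLs : leftPt p s = ∑ j ∈ Finset.range n, term p ωs j := by
    rw [← hes, leftPt_eq]
  have hLt : leftPt p t = ∑ j ∈ Finset.range n, term p ωt j := by
    rw [← het, leftPt_eq]
  have hex : ∃ k, k < n ∧ ωs k ≠ ωt k := by
    rcases Function.ne_iff.1 hst with ⟨i, hi⟩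
    exact ⟨i, i.isLt, by simpa [hωs, hωt, i.isLt] using hi⟩
  obtain ⟨hin, hne⟩ := Nat.find_spec hex
  have hmin : ∀ j, j < Nat.find hex → ωs j = ωt j := by
    intro j hj
    have h := Nat.find_min hex hj
    push_neg at h
    exact h (hj.trans hin)
  rcases Bool.eq_false_or_eq_true (ωs (Nat.find hex)) with hb | hb
  · right
    have hb' : ωt (Nat.find hex) = false := by
      rcases Bool.eq_false_or_eq_true (ωt (Nat.find hex)) with h' | h'
      · exact absurd (hb.trans h'.symm) hne
      · exact h'
    rw [hLs, hLt]
    exact sep_aux hp hin ωt ωs (fun j hj => (hmin j hj).symm) hb' hb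
  · left
    have hb' : ωt (Nat.find hex) = true := by
      rcases Bool.eq_false_or_eq_true (ωt (Nat.find hex)) with h' | h'
      · exact h'
      · exact absurd (hb.trans h'.symm) hne
    rw [hLs, hLt]
    exact sep_aux hp hin ωs ωt hmin hb hb'

lemma disjoint_Icc (hp : ∀ n, p n ∈ Set.Ioo (0:ℝ) 1) {n : ℕ} {s t : Fin n → Bool} (hst : s ≠ t)
    {x : ℝ} (hx : x ∈ Icc (leftPt p s) (leftPt p s + lam p n))
    (hx' : x ∈ Icc (leftPt p t) (leftPt p t + lam p n)) : False := by
  rcases separation hp hst with h | h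
  · linarith [hx.2, hx'.1]
  · linarith [hx'.2, hx.1]

lemma bits_eq (hp : ∀ n, p n ∈ Set.Ioo (0:ℝ) 1) {n : ℕ} {s : Fin n → Bool} {x : ℝ}
    (h : cmap p x ∈ Icc (leftPt p s) (leftPt p s + lam p n)) :
    (fun i : Fin n => bitsOf x i) = s := by
  by_contra hne
  exact disjoint_Icc hp hne (cmap_mem hp x n) h

lemma floor_bits {n : ℕ} {x y : ℝ} (hx0 : 0 ≤ x) (hy0 : 0 ≤ y) (hx1 : x < 1) (hy1 : y < 1)
    (hb : ∀ i, i < n → bitsOf x i = bitsOf y i) :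
    ⌊x * 2 ^ n⌋₊ = ⌊y * 2 ^ n⌋₊ := by
  induction n with
  | zero =>
    simp only [pow_zero, mul_one]
    rw [Nat.floor_eq_zero.2 hx1, Nat.floor_eq_zero.2 hy1]
  | succ n ih =>
    have hdiv : ∀ z : ℝ, 0 ≤ z → ⌊z * 2 ^ (n+1)⌋₊ / 2 = ⌊z * 2 ^ n⌋₊ := by
      intro z hz
      have h1 : ⌊z * 2 ^ (n+1) / (2:ℕ)⌋₊ = ⌊z * 2 ^ (n+1)⌋₊ / 2 := Nat.floor_div_natCast _ 2
      have h2 : z * 2 ^ (n+1) / (2:ℕ) = z * 2 ^ n := by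
        push_cast; ring
      rw [h2] at h1
      exact h1.symm
    have hmod : ⌊x * 2 ^ (n+1)⌋₊ % 2 = ⌊y * 2 ^ (n+1)⌋₊ % 2 := by
      have h := hb n (Nat.lt_succ_self n)
      unfold bitsOf at h
      have h' := decide_eq_decide.1 h
      omega
    have hx' := Nat.div_add_mod (⌊x * 2 ^ (n+1)⌋₊) 2
    have hy' := Nat.div_add_mod (⌊y * 2 ^ (n+1)⌋₊) 2
    have hihn := ih (fun i hi => hb i (hi.trans (Nat.lt_succ_self n)))
    rw [hdiv x hx0] at hx'
    rw [hdiv y hy0] at hy'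
    omega

lemma vol_cyl (n : ℕ) (x : ℝ) (hx : x ∈ Ico (0:ℝ) 1) :
    volume {y : ℝ | y ∈ Ico (0:ℝ) 1 ∧ ∀ i, i < n → bitsOf y i = bitsOf x i}
      ≤ ENNReal.ofReal (2⁻¹ ^ n) := by
  set k := ⌊x * 2 ^ n⌋₊ with hk
  have hsub : {y : ℝ | y ∈ Ico (0:ℝ) 1 ∧ ∀ i, i < n → bitsOf y i = bitsOf x i}
      ⊆ Ico ((k:ℝ) / 2 ^ n) (((k:ℝ) + 1) / 2 ^ n) := by
    rintro y ⟨⟨hy0, hy1⟩, hb⟩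
    have hfl : ⌊y * 2 ^ n⌋₊ = k := floor_bits hy0 hx.1 hy1 hx.2 hb
    have hp2 : (0:ℝ) < 2 ^ n := by positivity
    constructor
    · rw [div_le_iff₀ hp2]
      have := Nat.floor_le (by positivity : (0:ℝ) ≤ y * 2 ^ n)
      rw [hfl] at this
      linarith
    · rw [lt_div_iff₀ hp2]
      have := Nat.lt_floor_add_one (y * 2 ^ n)
      rw [hfl] at this
      push_cast at this ⊢
      linarith
  calc volume {y : ℝ | y ∈ Ico (0:ℝ) 1 ∧ ∀ i, i < n → bitsOf y i = bitsOf x i}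
      ≤ volume (Ico ((k:ℝ) / 2 ^ n) (((k:ℝ) + 1) / 2 ^ n)) := measure_mono hsub
    _ = ENNReal.ofReal (2⁻¹ ^ n) := by
        rw [Real.volume_Ico]
        congr 1
        have hp2 : (0:ℝ) < 2 ^ n := by positivity
        field_simp
        rw [← mul_pow]; norm_num

lemma measurable_cmap (hp : ∀ n, p n ∈ Set.Ioo (0:ℝ) 1) : Measurable (cmap p) := by
  have hbit : ∀ i, Measurable fun x : ℝ => bitsOf x i := by
    intro i
    have h1 : Measurable fun x : ℝ => ⌊x * 2 ^ (i+1)⌋₊ :=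
      Measurable.nat_floor (measurable_id.mul_const _)
    exact (measurable_of_countable (fun k : ℕ => decide (k % 2 = 1))).comp h1
  have hterm : ∀ m, Measurable fun x : ℝ => ∑ i ∈ Finset.range m, term p (bitsOf x) i := by
    intro m
    refine Finset.measurable_sum _ fun i _ => ?_
    have : (fun x : ℝ => term p (bitsOf x) i)
        = (fun b : Bool => if b then lam p i - lam p (i+1) else 0) ∘ (fun x => bitsOf x i) := by
      funext x; rfl
    rw [this]
    exact (measurable_of_countable _).comp (hbit i)
  refine measurable_of_tendsto_metrizable hterm ?_
  rw [tendsto_pi_nhds]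
  intro x
  exact (summable_term hp (bitsOf x)).hasSum.tendsto_sum_nat

/-- The natural measure on the Cantor set. -/
noncomputable def mu (p : ℕ → ℝ) : Measure ℝ :=
  Measure.map (cmap p) (volume.restrict (Ico (0:ℝ) 1))

lemma mu_Icc_le (hp : ∀ n, p n ∈ Set.Ioo (0:ℝ) 1) {n : ℕ} (s : Fin n → Bool) :
    mu p (Icc (leftPt p s) (leftPt p s + lam p n)) ≤ ENNReal.ofReal (2⁻¹ ^ n) := by
  rw [mu, Measure.map_apply (measurable_cmap hp) measurableSet_Icc,
    Measure.restrict_apply ((measurable_cmap hp) measurableSet_Icc)]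
  set A := cmap p ⁻¹' Icc (leftPt p s) (leftPt p s + lam p n) ∩ Ico (0:ℝ) 1 with hA
  rcases Set.eq_empty_or_nonempty A with hAe | ⟨x₀, hx₀⟩
  · rw [hAe]; simp
  · have hsub : A ⊆ {y : ℝ | y ∈ Ico (0:ℝ) 1 ∧ ∀ i, i < n → bitsOf y i = bitsOf x₀ i} := by
      rintro y ⟨hy1, hy2⟩
      refine ⟨hy2, fun i hi => ?_⟩
      have h1 := bits_eq hp hy1
      have h2 := bits_eq hp hx₀.1
      have := congrFun (h1.trans h2.symm) ⟨i, hi⟩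
      exact this
    exact (measure_mono hsub).trans (vol_cyl n x₀ hx₀.2)

lemma mu_compl_eq_zero (hp : ∀ n, p n ∈ Set.Ioo (0:ℝ) 1) (n : ℕ) :
    mu p ((⋃ s : Fin n → Bool, Icc (leftPt p s) (leftPt p s + lam p n))ᶜ) = 0 := by
  have hmeas : MeasurableSet (⋃ s : Fin n → Bool, Icc (leftPt p s) (leftPt p s + lam p n)) :=
    MeasurableSet.iUnion fun s => measurableSet_Icc
  rw [mu, Measure.map_apply (measurable_cmap hp) hmeas.compl]
  have : cmap p ⁻¹' (⋃ s : Fin n → Bool, Icc (leftPt p s) (leftPt p s + lam p n))ᶜ = ∅ := by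
    rw [Set.eq_empty_iff_forall_notMem]
    intro x hx
    exact hx (mem_iUnion.2 ⟨fun i : Fin n => bitsOf x i, cmap_mem hp x n⟩)
  rw [this]
  simp

lemma master (hp : ∀ n, p n ∈ Set.Ioo (0:ℝ) 1) (n : ℕ) (s : Set ℝ)
    (hs : Metric.ediam s ≤ ENNReal.ofReal (lam p n)) :
    mu p s ≤ 2 * ENNReal.ofReal (2⁻¹ ^ n) := by
  classical
  set U : (Fin n → Bool) → Set ℝ :=
    fun t => Icc (leftPt p t) (leftPt p t + lam p n) with hU
  set T : Finset (Fin n → Bool) := Finset.univ.filter fun t => (s ∩ U t).Nonempty with hT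
  -- distance between points of s is at most lam p n
  have hdist : ∀ x z : ℝ, x ∈ s → z ∈ s → dist x z ≤ lam p n := by
    intro x z hx hz
    have h := (EMetric.edist_le_diam_of_mem hx hz).trans hs
    rw [edist_dist] at h
    exact (ENNReal.ofReal_le_ofReal_iff (lam_pos hp n).le).1 h
  -- no three intervals can meet s
  have horder : ∀ u v w : Fin n → Bool, u ∈ T → w ∈ T →
      leftPt p u < leftPt p v → leftPt p v < leftPt p w → False := by
    intro u v w hu hw huv hvw
    obtain ⟨x, hxs, hxu⟩ := (Finset.mem_filter.1 hu).2
    obtain ⟨z, hzs, hzw⟩ := (Finset.mem_filter.1 hw).2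
    have hlam := lam_pos hp n
    have h1 : leftPt p u + lam p n < leftPt p v := by
      rcases separation hp (show u ≠ v from fun h => absurd (congrArg (leftPt p) h) huv.ne)
        with h | h
      · exact h
      · exfalso; linarith
    have h2 : leftPt p v + lam p n < leftPt p w := by
      rcases separation hp (show v ≠ w from fun h => absurd (congrArg (leftPt p) h) hvw.ne)
        with h | h
      · exact h
      · exfalso; linarith
    have hxle : x ≤ leftPt p u + lam p n := hxu.2
    have hzge : leftPt p w ≤ z := hzw.1
    have hd := hdist x z hxs hzs
    rw [Real.dist_eq] at hd
    have := le_abs_self (z - x)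
    rw [abs_sub_comm] at this
    linarith
  have hcard : T.card ≤ 2 := by
    by_contra hc
    push_neg at hc
    obtain ⟨a, b, c, ha, hb, hc', hab, hac, hbc⟩ := Finset.two_lt_card_iff.1 hc
    have hne : ∀ u v : Fin n → Bool, u ≠ v → leftPt p u ≠ leftPt p v := by
      intro u v huv
      have hlam := lam_pos hp n
      rcases separation hp huv with h | h
      · intro he; linarith
      · intro he; linarith
    rcases lt_trichotomy (leftPt p a) (leftPt p b) with h1 | h1 | h1
    · rcases lt_trichotomy (leftPt p b) (leftPt p c) with h2 | h2 | h2
      · exact horder a b c ha hc' h1 h2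
      · exact hne b c hbc h2
      · rcases lt_trichotomy (leftPt p a) (leftPt p c) with h3 | h3 | h3
        · exact horder a c b ha hb h3 h2
        · exact hne a c hac h3
        · exact horder c a b hc' hb h3 h1
    · exact hne a b hab h1
    · rcases lt_trichotomy (leftPt p a) (leftPt p c) with h2 | h2 | h2
      · exact horder b a c hb hc' h1 h2
      · exact hne a c hac h2
      · rcases lt_trichotomy (leftPt p c) (leftPt p b) with h3 | h3 | h3
        · exact horder c b a hc' ha h3 h1
        · exact hne c b hbc.symm h3
        · exact horder b c a hb ha h3 h2
  have hcover : s ⊆ (⋃ t ∈ T, U t) ∪ (⋃ t : Fin n → Bool, U t)ᶜ := by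
    intro x hx
    by_cases hxU : x ∈ ⋃ t : Fin n → Bool, U t
    · rcases mem_iUnion.1 hxU with ⟨t, ht⟩
      exact Or.inl (mem_biUnion (Finset.mem_filter.2 ⟨Finset.mem_univ t, ⟨x, hx, ht⟩⟩) ht)
    · exact Or.inr hxU
  calc mu p s ≤ mu p ((⋃ t ∈ T, U t) ∪ (⋃ t : Fin n → Bool, U t)ᶜ) := measure_mono hcover
    _ ≤ mu p (⋃ t ∈ T, U t) + mu p ((⋃ t : Fin n → Bool, U t)ᶜ) := measure_union_le _ _
    _ = mu p (⋃ t ∈ T, U t) := by rw [mu_compl_eq_zero hp n, add_zero]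
    _ ≤ ∑ t ∈ T, mu p (U t) := measure_biUnion_finset_le T U
    _ ≤ ∑ _t ∈ T, ENNReal.ofReal (2⁻¹ ^ n) := Finset.sum_le_sum fun t _ => mu_Icc_le hp t
    _ = T.card * ENNReal.ofReal (2⁻¹ ^ n) := by rw [Finset.sum_const, nsmul_eq_mul]
    _ ≤ 2 * ENNReal.ofReal (2⁻¹ ^ n) := by
        gcongr
        exact_mod_cast hcard

lemma mu_genCantorSet (hp : ∀ n, p n ∈ Set.Ioo (0:ℝ) 1) :
    mu p (genCantorSet p) = 1 := by
  have hmeas : MeasurableSet (genCantorSet p) :=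
    MeasurableSet.iInter fun n => MeasurableSet.iUnion fun s => measurableSet_Icc
  rw [mu, Measure.map_apply (measurable_cmap hp) hmeas]
  have : cmap p ⁻¹' genCantorSet p = univ := by
    rw [Set.eq_univ_iff_forall]
    exact fun x => cmap_mem_genCantorSet hp x
  rw [this, Measure.restrict_apply MeasurableSet.univ]
  simp

end GenCantorAux

open GenCantorAux Set in
/-- If `p n ∈ (0,1)` and `p n → 0`, the generalized Cantor set `C_P` has Hausdorff
dimension `1`. -/
theorem genCantorSet_dimH_eq_one (p : ℕ → ℝ) (hp : ∀ n, p n ∈ Set.Ioo (0 : ℝ) 1)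
    (hp0 : Tendsto p atTop (nhds 0)) :
    dimH (genCantorSet p) = 1 := by
  refine le_antisymm ((dimH_mono (Set.subset_univ _)).trans_eq Real.dimH_univ) ?_
  refine ENNReal.le_of_forall_nnreal_lt fun r hr => ?_
  rcases eq_or_ne r 0 with hr0 | hr0
  · simp [hr0]
  have hrpos : 0 < r := lt_of_le_of_ne (zero_le : 0 ≤ r) (Ne.symm hr0)
  have hd0 : (0:ℝ) < (r:ℝ) := by exact_mod_cast hrpos
  have hr1 : r < 1 := by exact_mod_cast hr
  have hd1 : (r:ℝ) < 1 := by exact_mod_cast hr1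
  set d : ℝ := (r:ℝ) with hdd
  -- choose N such that beyond it `((1 - p n)/2) ^ d ≥ 1/2`
  have htb : Tendsto (fun n => ((1 - p n)/2) ^ d) atTop (nhds ((2:ℝ)⁻¹ ^ d)) := by
    have h1 : Tendsto (fun n => (1 - p n)/2) atTop (nhds ((1 - 0)/2)) :=
      (tendsto_const_nhds.sub hp0).div_const 2
    have h2 : ((1:ℝ) - 0)/2 = 2⁻¹ := by norm_num
    rw [h2] at h1
    exact h1.rpow tendsto_const_nhds (Or.inl (by norm_num))
  have hgt : (2:ℝ)⁻¹ < 2⁻¹ ^ d := by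
    have := Real.rpow_lt_rpow_of_exponent_gt (by norm_num : (0:ℝ) < 2⁻¹) (by norm_num) hd1
    rwa [Real.rpow_one] at this
  obtain ⟨N, hN⟩ := eventually_atTop.1 (htb.eventually (eventually_ge_nhds hgt))
  set K : ℝ := (2:ℝ)⁻¹ ^ N / lam p N ^ d with hK
  have hKpos : 0 < K := div_pos (by positivity) (Real.rpow_pos_of_pos (lam_pos hp N) d)
  have hbound : ∀ n, N ≤ n → (2:ℝ)⁻¹ ^ n ≤ K * lam p n ^ d := by
    intro n hn
    induction n, hn using Nat.le_induction with
    | base =>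
      rw [hK, div_mul_cancel₀]
      exact (Real.rpow_pos_of_pos (lam_pos hp N) d).ne'
    | succ n hn ih =>
      have hfact : lam p (n+1) ^ d = lam p n ^ d * ((1 - p n)/2) ^ d := by
        rw [lam_succ, Real.mul_rpow (lam_pos hp n).le (by have := (hp n).2; linarith)]
      have h2 := hN n hn
      have hlamd : (0:ℝ) < lam p n ^ d := Real.rpow_pos_of_pos (lam_pos hp n) d
      calc (2:ℝ)⁻¹ ^ (n+1) = 2⁻¹ * 2⁻¹ ^ n := by rw [pow_succ]; ring
        _ ≤ 2⁻¹ * (K * lam p n ^ d) := by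
            apply mul_le_mul_of_nonneg_left ih (by norm_num)
        _ ≤ ((1 - p n)/2) ^ d * (K * lam p n ^ d) := by
            apply mul_le_mul_of_nonneg_right h2 (by positivity)
        _ = K * lam p (n+1) ^ d := by rw [hfact]; ring
  set ν : Measure ℝ := (ENNReal.ofReal (4 * K))⁻¹ • mu p with hν
  have hC0 : (0:ℝ) < 4 * K := by linarith
  have hCtop : ENNReal.ofReal (4 * K) ≠ ⊤ := ENNReal.ofReal_ne_top
  have hCne : ENNReal.ofReal (4 * K) ≠ 0 := by
    rw [Ne, ENNReal.ofReal_eq_zero]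
    push_neg
    exact hC0
  have hν_le : ν ≤ μH[d] := by
    refine Measure.le_hausdorffMeasure d ν (ENNReal.ofReal (lam p (N+1)))
      (ENNReal.ofReal_pos.2 (lam_pos hp (N+1))) fun s hsd => ?_
    have hsfin : Metric.ediam s ≠ ⊤ :=
      fun h => by rw [h] at hsd; exact ENNReal.ofReal_ne_top (top_le_iff.1 hsd)
    set δ : ℝ := (Metric.ediam s).toReal with hδ
    have hδ0 : 0 ≤ δ := ENNReal.toReal_nonneg
    have hδe : Metric.ediam s = ENNReal.ofReal δ := (ENNReal.ofReal_toReal hsfin).symm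
    have hδle : δ ≤ lam p (N+1) := by
      rw [hδe] at hsd
      exact (ENNReal.ofReal_le_ofReal_iff (lam_pos hp (N+1)).le).1 hsd
    rcases eq_or_lt_of_le hδ0 with hδz | hδpos
    · -- degenerate case: diameter 0
      have hz : ∀ n : ℕ, mu p s ≤ 2 * ENNReal.ofReal ((2:ℝ)⁻¹ ^ n) := by
        intro n
        apply master hp n s
        rw [hδe, ← hδz]
        simp
      have hlim : Tendsto (fun n => 2 * ENNReal.ofReal ((2:ℝ)⁻¹ ^ n)) atTop (nhds 0) := by
        have h1 : Tendsto (fun n : ℕ => ENNReal.ofReal ((2:ℝ)⁻¹ ^ n)) atTop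
            (nhds (ENNReal.ofReal 0)) :=
          ENNReal.tendsto_ofReal
            (tendsto_pow_atTop_nhds_zero_of_lt_one (by norm_num) (by norm_num))
        simpa using ENNReal.Tendsto.const_mul h1 (Or.inr (by norm_num))
      have hmu0 : mu p s = 0 := le_antisymm (ge_of_tendsto' hlim hz) zero_le
      rw [hν]
      simp [hmu0]
    · -- main case
      obtain ⟨m0, hm0⟩ : ∃ m, lam p m < δ :=
        ((lam_tendsto_zero hp).eventually (eventually_lt_nhds hδpos)).exists
      have hexm : ∃ m, lam p m < δ := ⟨m0, hm0⟩
      set M := Nat.find hexm with hM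
      have hMspec : lam p M < δ := Nat.find_spec hexm
      have hMmin : ∀ k, k < M → δ ≤ lam p k := fun k hk => le_of_not_gt (Nat.find_min hexm hk)
      have hM1 : N + 1 < M := by
        by_contra hle
        push_neg at hle
        have h1 : lam p M ≥ lam p (N+1) := (lam_anti hp).antitone hle
        linarith
      set n := M - 1 with hn
      have hn1 : n + 1 = M := by omega
      have hnN : N ≤ n + 1 := by omega
      have hδlam : δ ≤ lam p n := hMmin n (by omega)
      have hmus : mu p s ≤ 2 * ENNReal.ofReal ((2:ℝ)⁻¹ ^ n) := by
        apply master hp n s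
        rw [hδe]
        exact ENNReal.ofReal_le_ofReal hδlam
      have hreal : 2 * (2:ℝ)⁻¹ ^ n ≤ (4 * K) * δ ^ d := by
        have h1 : (2:ℝ)⁻¹ ^ (n+1) ≤ K * lam p (n+1) ^ d := hbound (n+1) hnN
        have h2 : lam p (n+1) ^ d ≤ δ ^ d :=
          Real.rpow_le_rpow (lam_pos hp (n+1)).le (by rw [hn1]; exact hMspec.le) hd0.le
        have h3 : (2:ℝ)⁻¹ ^ n = 2 * 2⁻¹ ^ (n+1) := by rw [pow_succ]; ring
        nlinarith [hKpos]
      calc ν s = (ENNReal.ofReal (4 * K))⁻¹ * mu p s := by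
            rw [hν, Measure.smul_apply, smul_eq_mul]
        _ ≤ (ENNReal.ofReal (4 * K))⁻¹ * (2 * ENNReal.ofReal ((2:ℝ)⁻¹ ^ n)) := by gcongr
        _ ≤ (ENNReal.ofReal (4 * K))⁻¹ * ENNReal.ofReal ((4 * K) * δ ^ d) := by
            gcongr
            have he : (2:ENNReal) * ENNReal.ofReal ((2:ℝ)⁻¹ ^ n)
                = ENNReal.ofReal (2 * (2:ℝ)⁻¹ ^ n) := by
              rw [ENNReal.ofReal_mul (by norm_num)]
              norm_num
            rw [he]
            exact ENNReal.ofReal_le_ofReal hreal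
        _ = (ENNReal.ofReal (4 * K))⁻¹ * (ENNReal.ofReal (4 * K) * ENNReal.ofReal (δ ^ d)) := by
            rw [ENNReal.ofReal_mul hC0.le]
        _ = ENNReal.ofReal (δ ^ d) := by
            rw [← mul_assoc, ENNReal.inv_mul_cancel hCne hCtop, one_mul]
        _ = Metric.ediam s ^ d := by
            rw [hδe, ENNReal.ofReal_rpow_of_nonneg hδ0 hd0.le]
  have hpos : μH[d] (genCantorSet p) ≠ 0 := by
    have h1 : ν (genCantorSet p) ≤ μH[d] (genCantorSet p) := hν_le _
    have h2 : ν (genCantorSet p) = (ENNReal.ofReal (4 * K))⁻¹ := by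
      rw [hν, Measure.smul_apply, smul_eq_mul, mu_genCantorSet hp, mul_one]
    rw [h2] at h1
    intro h0
    rw [h0] at h1
    exact (ENNReal.inv_ne_zero.2 hCtop) (le_antisymm h1 zero_le)
  exact le_dimH_of_hausdorffMeasure_ne_zero hpos
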